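/- arXiv:2411.04688 — 4 statements merged into one kernel-verified Lean document; each statement's English description precedes it below -/
import Mathlib

section
/- With the notation of the previous statement, partition {1,...,m} into m/k consecutive blocks B₁,...,B_{m/k} of size k. Then (m/k)·F(ρ,ψ) ≤ ∑_{j=1}^{m/k} F(ρ_{Bⱼ}, ψ_{Bⱼ}), and consequently 1 - (m/k)(1 - F(ρ,ψ)) ≤ W^{(k)}(ρ,ψ) := 1 - ∑_{j=1}^{m/k} (1 - F(ρ_{Bⱼ}, ψ_{Bⱼ})). -/
open Matrix ComplexOrder

noncomputable def toE {α : Type*} [Fintype α] (v : α → ℂ) : EuclideanSpace ℂ α :=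
  (WithLp.equiv 2 (α → ℂ)).symm v

lemma quad_form_as_norm {α : Type*} [Fintype α] [DecidableEq α]
    {ρ σ : Matrix α α ℂ} (hH : σᴴ = σ) (hσ : σ * σ = ρ) (v : α → ℂ) :
    (star v ⬝ᵥ ρ *ᵥ v).re = ‖toE (σ *ᵥ v)‖ ^ 2 := by
  subst hσ
  have h1 : star v ⬝ᵥ (σ * σ) *ᵥ v = star (σ *ᵥ v) ⬝ᵥ (σ *ᵥ v) := by
    rw [← mulVec_mulVec, dotProduct_mulVec, star_mulVec, hH]
  rw [h1, EuclideanSpace.norm_eq, Real.sq_sqrt (by positivity)]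
  simp only [dotProduct, Pi.star_apply]
  rw [Complex.re_sum]
  congr 1; ext x
  have : toE (σ *ᵥ v) x = (σ *ᵥ v) x := rfl
  rw [this]
  simp [Complex.star_def, mul_comm, Complex.mul_conj, Complex.normSq_eq_norm_sq,
    ← Complex.ofReal_pow]

open scoped MatrixOrder in
lemma key_CS {α : Type*} [Fintype α] [DecidableEq α]
    {ρ : Matrix α α ℂ} (hρ : ρ.PosSemidef)
    {Z : Type*} [Fintype Z] (u : Z → α → ℂ) (c : Z → ℂ)
    (hc : ∑ z, ‖c z‖ ^ 2 = 1) :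
    (star (∑ z, c z • u z) ⬝ᵥ ρ *ᵥ (∑ z, c z • u z)).re ≤
      ∑ z, (star (u z) ⬝ᵥ ρ *ᵥ (u z)).re := by
  set σ := CFC.sqrt ρ with hσdef
  have hH : σᴴ = σ := (CFC.sqrt_nonneg ρ).posSemidef.1
  have hσ : σ * σ = ρ := CFC.sqrt_mul_sqrt_self ρ hρ.nonneg
  set L : (α → ℂ) →ₗ[ℂ] EuclideanSpace ℂ α :=
    (WithLp.linearEquiv 2 ℂ (α → ℂ)).symm.toLinearMap.comp σ.mulVecLin with hLdef
  have hLtoE : ∀ v, L v = toE (σ *ᵥ v) := fun v => rfl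
  have hq : ∀ v, (star v ⬝ᵥ ρ *ᵥ v).re = ‖L v‖ ^ 2 := fun v => by
    rw [hLtoE]; exact quad_form_as_norm hH hσ v
  rw [hq]
  simp only [fun z => hq (u z)]
  have hmap : L (∑ z, c z • u z) = ∑ z, c z • L (u z) := by
    rw [map_sum]; exact Finset.sum_congr rfl fun z _ => _root_.map_smul L (c z) (u z)
  rw [hmap]
  have h1 : ‖∑ z, c z • L (u z)‖ ≤ ∑ z, ‖c z‖ * ‖L (u z)‖ := by
    refine (norm_sum_le _ _).trans_eq ?_
    simp [norm_smul]
  have h2 : (∑ z, ‖c z‖ * ‖L (u z)‖) ^ 2 ≤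
      (∑ z, ‖c z‖ ^ 2) * ∑ z, ‖L (u z)‖ ^ 2 :=
    Finset.sum_mul_sq_le_sq_mul_sq _ _ _
  calc ‖∑ z, c z • L (u z)‖ ^ 2 ≤ (∑ z, ‖c z‖ * ‖L (u z)‖) ^ 2 := by
        apply pow_le_pow_left₀ (norm_nonneg _) h1
    _ ≤ (∑ z, ‖c z‖ ^ 2) * ∑ z, ‖L (u z)‖ ^ 2 := h2
    _ = ∑ z, ‖L (u z)‖ ^ 2 := by rw [hc, one_mul]


/-- Partial trace of a multi-block operator onto the block `j`. -/
noncomputable def redMat {n : ℕ} {I : Fin n → Type*} [∀ j, Fintype (I j)]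
    [∀ j, DecidableEq (I j)]
    (ρ : Matrix (∀ j, I j) (∀ j, I j) ℂ) (j : Fin n) : Matrix (I j) (I j) ℂ :=
  fun a b => ∑ y : ∀ i, I i, if y j = a then ρ y (Function.update y j b) else 0

section perblock
variable {n : ℕ} {I : Fin n → Type*} [∀ j, Fintype (I j)] [∀ j, DecidableEq (I j)]
  (ρ : Matrix (∀ j, I j) (∀ j, I j) ℂ) (ψ : ∀ j, I j → ℂ) (j : Fin n)

noncomputable def uvec (z : ∀ i : {i : Fin n // i ≠ j}, I i) : (∀ i, I i) → ℂ :=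
  fun x => if (fun i : {i : Fin n // i ≠ j} => x i) = z then ψ j (x j) else 0

lemma symm_piSplit (x : ∀ i, I i) (b : I j) :
    (Equiv.piSplitAt j I).symm (b, fun i : {i : Fin n // i ≠ j} => x i)
      = Function.update x j b := by
  ext i
  by_cases h : i = j
  · subst h; simp
  · simp [Equiv.piSplitAt_symm_apply, h, Function.update_of_ne h]

lemma hRHS :
    (redMat ρ j * vecMulVec (ψ j) (star (ψ j))).trace
      = ∑ y : ∀ i, I i, ∑ b, star (ψ j (y j)) * ρ y (Function.update y j b) * ψ j b := by
  simp only [Matrix.trace, Matrix.diag_apply, Matrix.mul_apply, vecMulVec_apply,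
    Pi.star_apply, redMat, Finset.sum_mul, ite_mul, zero_mul]
  rw [Finset.sum_comm]
  refine (Finset.sum_congr rfl fun b _ => Finset.sum_comm).trans ?_
  simp only [Finset.sum_ite_eq, Finset.mem_univ, if_true]
  rw [Finset.sum_comm]
  exact Finset.sum_congr rfl fun y _ => Finset.sum_congr rfl fun b _ => by ring

lemma inner_collapse (x : ∀ i, I i) :
    (∑ y : ∀ i, I i, ρ x y *
        (if (fun i : {i : Fin n // i ≠ j} => y i) = (fun i : {i : Fin n // i ≠ j} => x i)
          then ψ j (y j) else 0))
      = ∑ b, ρ x (Function.update x j b) * ψ j b := by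
  rw [← Equiv.sum_comp (Equiv.piSplitAt j I).symm, Fintype.sum_prod_type]
  refine Finset.sum_congr rfl fun b _ => ?_
  have key : ∀ w : ∀ i : {i : Fin n // i ≠ j}, I i,
      (fun i : {i : Fin n // i ≠ j} => (Equiv.piSplitAt j I).symm (b, w) i) = w := by
    intro w; funext i; simp [Equiv.piSplitAt_symm_apply, i.2]
  calc ∑ w, ρ x ((Equiv.piSplitAt j I).symm (b, w)) *
        (if (fun i : {i : Fin n // i ≠ j} => (Equiv.piSplitAt j I).symm (b, w) i)
            = (fun i : {i : Fin n // i ≠ j} => x i)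
          then ψ j ((Equiv.piSplitAt j I).symm (b, w) j) else 0)
      = ∑ w, if w = (fun i : {i : Fin n // i ≠ j} => x i)
          then ρ x ((Equiv.piSplitAt j I).symm (b, w)) * ψ j b else 0 := by
        refine Finset.sum_congr rfl fun w _ => ?_
        rw [key w]
        by_cases h : w = fun i : {i : Fin n // i ≠ j} => x i
        · simp [h, Equiv.piSplitAt_symm_apply]
        · simp [h]
    _ = _ := by
        rw [Finset.sum_ite_eq']
        simp [symm_piSplit j x b]

lemma hLHS :
    ∑ z, (star (uvec ψ j z) ⬝ᵥ ρ *ᵥ (uvec ψ j z))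
      = ∑ y : ∀ i, I i, ∑ b, star (ψ j (y j)) * ρ y (Function.update y j b) * ψ j b := by
  simp only [dotProduct, mulVec, Pi.star_apply, uvec, apply_ite star, star_zero,
    ite_mul, zero_mul]
  rw [Finset.sum_comm]
  simp only [Finset.sum_ite_eq, Finset.mem_univ, if_true]
  refine Finset.sum_congr rfl fun x _ => ?_
  rw [inner_collapse ρ ψ j x, Finset.mul_sum]
  exact Finset.sum_congr rfl fun b _ => by ring
lemma psi_decomp :
    (∑ z, (∏ i : {i : Fin n // i ≠ j}, ψ i (z i)) • uvec ψ j z)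
      = fun x : ∀ i, I i => ∏ i, ψ i (x i) := by
  funext x
  simp only [Finset.sum_apply, Pi.smul_apply, uvec, smul_eq_mul, mul_ite, mul_zero]
  rw [Finset.sum_ite_eq, if_pos (Finset.mem_univ _)]
  rw [Fintype.prod_eq_prod_compl_mul j (fun i => ψ i (x i))]
  congr 1
  exact (Finset.prod_subtype ({j}ᶜ) (fun i => by simp) (fun i => ψ i (x i))).symm

lemma coeff_norm (hψ : ∀ i, ∑ a, ‖ψ i a‖ ^ 2 = 1) :
    ∑ z : ∀ i : {i : Fin n // i ≠ j}, I i,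
      ‖∏ i : {i : Fin n // i ≠ j}, ψ i (z i)‖ ^ 2 = 1 := by
  have h1 : ∀ z : ∀ i : {i : Fin n // i ≠ j}, I i,
      ‖∏ i : {i : Fin n // i ≠ j}, ψ i (z i)‖ ^ 2
        = ∏ i : {i : Fin n // i ≠ j}, ‖ψ i (z i)‖ ^ 2 := fun z => by
    rw [norm_prod, ← Finset.prod_pow]
  have h2 := Fintype.prod_sum
    (fun (i : {i : Fin n // i ≠ j}) (a : I i.1) => ‖ψ i.1 a‖ ^ 2)
  rw [Finset.sum_congr rfl fun z _ => h1 z, ← h2]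
  exact Finset.prod_eq_one fun i _ => hψ i

end perblock

lemma trace_outer {α : Type*} [Fintype α] (M : Matrix α α ℂ) (φ : α → ℂ) :
    (M * vecMulVec φ (star φ)).trace = star φ ⬝ᵥ M *ᵥ φ := by
  simp only [Matrix.trace, Matrix.diag_apply, Matrix.mul_apply, vecMulVec_apply,
    dotProduct, mulVec, Pi.star_apply, Finset.mul_sum]
  exact Finset.sum_congr rfl fun x _ => Finset.sum_congr rfl fun y _ => by ring


/-- Left inequality of Eq. (24) of Lemma 2: with `m` modes grouped into
`n = m/k` blocks (the `j`-th block Hilbert space being `I j`),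
`(m/k)·F(ρ,ψ) ≤ ∑ⱼ F(ρ_{Bⱼ}, ψ_{Bⱼ})`, hence
`1 - (m/k)(1 - F(ρ,ψ)) ≤ W^{(k)}(ρ,ψ) = 1 - ∑ⱼ (1 - F(ρ_{Bⱼ}, ψ_{Bⱼ}))`. -/
theorem witness_robustness_lower_bound {n : ℕ} {I : Fin n → Type*}
    [∀ j, Fintype (I j)] [∀ j, DecidableEq (I j)]
    (ρ : Matrix (∀ j, I j) (∀ j, I j) ℂ) (hρ : ρ.PosSemidef) (htr : ρ.trace = 1)
    (ψ : ∀ j, I j → ℂ) (hψ : ∀ j, ∑ a, ‖ψ j a‖ ^ 2 = 1) :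
    (n : ℝ) *
        ((ρ * vecMulVec (fun x : ∀ i, I i => ∏ i, ψ i (x i))
            (star fun x : ∀ i, I i => ∏ i, ψ i (x i))).trace).re ≤
      (∑ j, ((redMat ρ j * vecMulVec (ψ j) (star (ψ j))).trace).re) ∧
    1 - (n : ℝ) * (1 -
        ((ρ * vecMulVec (fun x : ∀ i, I i => ∏ i, ψ i (x i))
            (star fun x : ∀ i, I i => ∏ i, ψ i (x i))).trace).re) ≤
      1 - ∑ j, (1 - ((redMat ρ j * vecMulVec (ψ j) (star (ψ j))).trace).re) := by
  set Ψ : (∀ i, I i) → ℂ := fun x => ∏ i, ψ i (x i) with hΨdef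
  set F : ℝ := ((ρ * vecMulVec Ψ (star Ψ)).trace).re with hFdef
  set G : Fin n → ℝ :=
    fun j => ((redMat ρ j * vecMulVec (ψ j) (star (ψ j))).trace).re with hGdef
  have hjle : ∀ j, F ≤ G j := by
    intro j
    have h1 := key_CS hρ (uvec ψ j)
      (fun z => ∏ i : {i : Fin n // i ≠ j}, ψ i (z i)) (coeff_norm ψ j hψ)
    have h2 : (∑ z, (fun z => ∏ i : {i : Fin n // i ≠ j}, ψ i (z i)) z • uvec ψ j z) = Ψ :=
      psi_decomp ψ j
    rw [h2] at h1
    have h3 : ∑ z, (star (uvec ψ j z) ⬝ᵥ ρ *ᵥ (uvec ψ j z)).re = G j := by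
      rw [← Complex.re_sum, hLHS ρ ψ j]
      show _ = (redMat ρ j * vecMulVec (ψ j) (star (ψ j))).trace.re
      rw [hRHS ρ ψ j]
    have h4 : F = (star Ψ ⬝ᵥ ρ *ᵥ Ψ).re := by rw [hFdef, trace_outer]
    rw [h4, ← h3]
    exact h1
  have hsum : (n : ℝ) * F ≤ ∑ j, G j := by
    calc (n : ℝ) * F = ∑ _j : Fin n, F := by
          rw [Finset.sum_const, Finset.card_univ, Fintype.card_fin, nsmul_eq_mul]
      _ ≤ ∑ j, G j := Finset.sum_le_sum fun j _ => hjle j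
  refine ⟨hsum, ?_⟩
  have hsub : ∑ j, (1 - G j) = (n : ℝ) - ∑ j, G j := by
    rw [Finset.sum_sub_distrib, Finset.sum_const, Finset.card_univ, Fintype.card_fin,
      nsmul_eq_mul, mul_one]
  rw [hsub]
  nlinarith [hsum]
end

section
/- Let ρ be a density operator on an m-fold tensor product and ψ = ψ₁ ⊗ ... ⊗ ψ_m a product of unit vectors, with m = (m/k)·k partitioned into blocks B₁,...,B_{m/k}. Then W^{(k)}(ρ,ψ) := 1 - ∑_{j=1}^{m/k} (1 - F(ρ_{Bⱼ}, ψ_{Bⱼ})) ≤ F(ρ, ψ), i.e., the k-mode fidelity witness is a lower bound on the true multimode fidelity. -/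
open Matrix ComplexOrder

set_option linter.unusedSectionVars false

section aux
variable {n : ℕ} {I : Fin n → Type*} [∀ j, Fintype (I j)] [∀ j, DecidableEq (I j)]

noncomputable def pm (ψ : ∀ j, I j → ℂ) (s : Finset (Fin n)) :
    Matrix (∀ j, I j) (∀ j, I j) ℂ :=
  fun x y => ∏ i, if i ∈ s then ψ i (x i) * (starRingEnd ℂ) (ψ i (y i))
    else (if x i = y i then 1 else 0)

variable (ψ : ∀ j, I j → ℂ)

lemma pm_empty : pm ψ (∅ : Finset (Fin n)) = 1 := by
  ext x y
  simp only [pm, Finset.notMem_empty, if_false]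
  rw [Finset.prod_boole, one_apply]
  congr 1
  simp [funext_iff]

lemma psi_norm (hψ : ∀ j, ∑ a, ‖ψ j a‖ ^ 2 = 1) (j : Fin n) :
    ∑ c, (starRingEnd ℂ) (ψ j c) * ψ j c = 1 := by
  have h : ∀ c, (starRingEnd ℂ) (ψ j c) * ψ j c = ((‖ψ j c‖ ^ 2 : ℝ) : ℂ) := by
    intro c
    rw [RCLike.conj_mul]
    norm_cast
  simp only [h]
  rw [← Complex.ofReal_sum, hψ j, Complex.ofReal_one]

lemma pm_mul (hψ : ∀ j, ∑ a, ‖ψ j a‖ ^ 2 = 1) (s t : Finset (Fin n)) :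
    pm ψ s * pm ψ t = pm ψ (s ∪ t) := by
  ext x y
  rw [mul_apply]
  simp only [pm]
  calc ∑ z : ∀ i, I i,
      (∏ i, if i ∈ s then ψ i (x i) * (starRingEnd ℂ) (ψ i (z i)) else (if x i = z i then 1 else 0)) *
      (∏ i, if i ∈ t then ψ i (z i) * (starRingEnd ℂ) (ψ i (y i)) else (if z i = y i then 1 else 0))
      = ∑ z : ∀ i, I i, ∏ i,
        ((if i ∈ s then ψ i (x i) * (starRingEnd ℂ) (ψ i (z i)) else (if x i = z i then 1 else 0)) *
        (if i ∈ t then ψ i (z i) * (starRingEnd ℂ) (ψ i (y i)) else (if z i = y i then 1 else 0))) := by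
          simp_rw [Finset.prod_mul_distrib]
    _ = ∏ i, ∑ c : I i,
        ((if i ∈ s then ψ i (x i) * (starRingEnd ℂ) (ψ i c) else (if x i = c then 1 else 0)) *
        (if i ∈ t then ψ i c * (starRingEnd ℂ) (ψ i (y i)) else (if c = y i then 1 else 0))) :=
          (Fintype.prod_sum (fun i (c : I i) =>
            (if i ∈ s then ψ i (x i) * (starRingEnd ℂ) (ψ i c) else (if x i = c then 1 else 0)) *
            (if i ∈ t then ψ i c * (starRingEnd ℂ) (ψ i (y i)) else (if c = y i then 1 else 0)))).symm
    _ = ∏ i, (if i ∈ s ∪ t then ψ i (x i) * (starRingEnd ℂ) (ψ i (y i))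
        else (if x i = y i then 1 else 0)) := by
          refine Finset.prod_congr rfl fun i _ => ?_
          by_cases hs : i ∈ s <;> by_cases ht : i ∈ t
          · simp only [hs, ht, if_true, Finset.mem_union, true_or]
            have h1 : ∀ c : I i, ψ i (x i) * (starRingEnd ℂ) (ψ i c) *
                (ψ i c * (starRingEnd ℂ) (ψ i (y i))) =
                (ψ i (x i) * (starRingEnd ℂ) (ψ i (y i))) * ((starRingEnd ℂ) (ψ i c) * ψ i c) := by
              intro c; ring
            simp_rw [h1, ← Finset.mul_sum, psi_norm ψ hψ i, mul_one]
          · simp only [hs, ht, if_true, if_false, Finset.mem_union, true_or]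
            simp
          · simp only [hs, ht, if_true, if_false, Finset.mem_union, or_true]
            simp
          · simp only [hs, ht, if_false, Finset.mem_union, or_self]
            have h2 : ∀ c : I i, (if x i = c then (1:ℂ) else 0) * (if c = y i then 1 else 0)
                = if c = x i then (if c = y i then (1:ℂ) else 0) else 0 := by
              intro c
              by_cases h : c = x i
              · subst h; simp
              · simp [h, Ne.symm h]
            simp_rw [h2]
            rw [Finset.sum_ite_eq' Finset.univ (x i) (fun c => if c = y i then (1:ℂ) else 0)]
            simp

lemma pm_hermitian (s : Finset (Fin n)) : (pm ψ s).IsHermitian := by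
  ext x y
  simp only [conjTranspose_apply, pm, star_prod]
  refine Finset.prod_congr rfl fun i _ => ?_
  by_cases hs : i ∈ s
  · simp only [hs, if_true, star_mul', RingHomCompTriple.comp_apply, RingHom.id_apply]
    simp [mul_comm]
  · simp only [hs, if_false, apply_ite (star : ℂ → ℂ), star_one, star_zero]
    by_cases h : y i = x i
    · simp [h]
    · have h' : ¬ x i = y i := fun hh => h hh.symm
      simp [h, h']
lemma herm_idem_posSemidef {A : Matrix (∀ j, I j) (∀ j, I j) ℂ}
    (hH : A.IsHermitian) (hI : A * A = A) : A.PosSemidef := by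
  have h : A = Aᴴ * A := by rw [hH.eq, hI]
  rw [h]
  exact posSemidef_conjTranspose_mul_self A

lemma one_sub_pm_herm (s : Finset (Fin n)) : (1 - pm ψ s)ᴴ = 1 - pm ψ s := by
  rw [conjTranspose_sub, conjTranspose_one, (pm_hermitian ψ s).eq]

lemma key_psd (hψ : ∀ j, ∑ a, ‖ψ j a‖ ^ 2 = 1) (s : Finset (Fin n)) :
    (pm ψ s + (∑ j ∈ s, (1 - pm ψ {j})) - 1).PosSemidef := by
  classical
  induction s using Finset.induction_on with
  | empty =>
      simp only [Finset.sum_empty, pm_empty, add_zero, sub_self]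
      exact PosSemidef.zero
  | @insert a s ha ih =>
      have hcomm : pm ψ {a} * pm ψ s = pm ψ s * pm ψ {a} := by
        rw [pm_mul ψ hψ, pm_mul ψ hψ, Finset.union_comm]
      have hQ2 : pm ψ {a} * pm ψ {a} = pm ψ {a} := by
        rw [pm_mul ψ hψ, Finset.union_self]
      have hR2 : pm ψ s * pm ψ s = pm ψ s := by
        rw [pm_mul ψ hψ, Finset.union_self]
      have hcomm' : (1 - pm ψ s) * (1 - pm ψ {a}) = (1 - pm ψ {a}) * (1 - pm ψ s) := by
        simp only [sub_mul, mul_sub, one_mul, mul_one, hcomm]; abel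
      have hQR : ((1 - pm ψ {a}) * (1 - pm ψ s)).PosSemidef := by
        apply herm_idem_posSemidef
        · show _ᴴ = _
          rw [conjTranspose_mul, one_sub_pm_herm, one_sub_pm_herm, hcomm']
        · have e1 : (1 - pm ψ {a}) * (1 - pm ψ {a}) = 1 - pm ψ {a} := by
            simp only [sub_mul, mul_sub, one_mul, mul_one, hQ2]; abel
          have e2 : (1 - pm ψ s) * (1 - pm ψ s) = 1 - pm ψ s := by
            simp only [sub_mul, mul_sub, one_mul, mul_one, hR2]; abel
          calc (1 - pm ψ {a}) * (1 - pm ψ s) * ((1 - pm ψ {a}) * (1 - pm ψ s))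
              = (1 - pm ψ {a}) * ((1 - pm ψ s) * (1 - pm ψ {a})) * (1 - pm ψ s) := by
                noncomm_ring
            _ = ((1 - pm ψ {a}) * (1 - pm ψ {a})) * ((1 - pm ψ s) * (1 - pm ψ s)) := by
                rw [hcomm']; noncomm_ring
            _ = (1 - pm ψ {a}) * (1 - pm ψ s) := by rw [e1, e2]
      have hsplit : pm ψ (insert a s) + (∑ j ∈ insert a s, (1 - pm ψ {j})) - 1 =
          (pm ψ s + (∑ j ∈ s, (1 - pm ψ {j})) - 1) + (1 - pm ψ {a}) * (1 - pm ψ s) := by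
        rw [Finset.sum_insert ha]
        have h : pm ψ (insert a s) = pm ψ {a} * pm ψ s := by
          rw [pm_mul ψ hψ, Finset.insert_eq]
        rw [h]
        noncomm_ring
      rw [hsplit]
      exact ih.add hQR

lemma pm_univ : pm ψ (Finset.univ : Finset (Fin n)) =
    vecMulVec (fun x : ∀ i, I i => ∏ i, ψ i (x i))
      (star fun x : ∀ i, I i => ∏ i, ψ i (x i)) := by
  ext x y
  simp only [pm, Finset.mem_univ, if_true, vecMulVec_apply, Pi.star_apply, star_prod]
  rw [Finset.prod_mul_distrib]
  rfl

lemma trace_psd_nonneg {A : Matrix (∀ j, I j) (∀ j, I j) ℂ} (hA : A.PosSemidef) :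
    0 ≤ A.trace := by
  exact hA.trace_nonneg
lemma update_sum_collapse (f : (∀ i, I i) → ℂ) (x : ∀ i, I i) (j : Fin n) :
    ∑ y : ∀ i, I i, (if Function.update x j (y j) = y then f y else 0)
      = ∑ b : I j, f (Function.update x j b) := by
  have key : ∀ y : ∀ i, I i, (if Function.update x j (y j) = y then f y else 0)
      = ∑ b : I j, if y = Function.update x j b then f y else 0 := by
    intro y
    have hb : ∀ b : I j, (y = Function.update x j b) ↔
        (b = y j ∧ Function.update x j (y j) = y) := by
      intro b
      constructor
      · intro h
        have hbj : b = y j := by rw [h, Function.update_self]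
        exact ⟨hbj, by rw [hbj] at h; exact h.symm⟩
      · rintro ⟨hbj, h⟩
        rw [hbj]; exact h.symm
    simp_rw [hb, ite_and]
    rw [Finset.sum_ite_eq' Finset.univ (y j)
      (fun _ => if Function.update x j (y j) = y then f y else 0)]
    simp
  simp_rw [key]
  rw [Finset.sum_comm]
  refine Finset.sum_congr rfl fun b _ => ?_
  rw [Finset.sum_ite_eq' Finset.univ (Function.update x j b) f]
  simp

lemma trace_pm_single (ρ : Matrix (∀ j, I j) (∀ j, I j) ℂ) (j : Fin n) :
    (ρ * pm ψ {j}).trace = (redMat ρ j * vecMulVec (ψ j) (star (ψ j))).trace := by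
  classical
  have hpm : ∀ x y : ∀ i, I i, pm ψ ({j} : Finset (Fin n)) y x =
      (ψ j (y j) * (starRingEnd ℂ) (ψ j (x j))) *
        (if Function.update x j (y j) = y then 1 else 0) := by
    intro x y
    show (∏ i, if i ∈ ({j} : Finset (Fin n)) then ψ i (y i) * (starRingEnd ℂ) (ψ i (x i))
      else (if y i = x i then 1 else 0)) = _
    rw [← Finset.prod_compl_mul_prod ({j} : Finset (Fin n)), mul_comm]
    congr 1
    · rw [Finset.prod_singleton]
      simp
    · have hc : (∏ i ∈ ({j}ᶜ : Finset (Fin n)), if i ∈ ({j} : Finset (Fin n)) then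
          ψ i (y i) * (starRingEnd ℂ) (ψ i (x i)) else (if y i = x i then 1 else 0)) =
          ∏ i ∈ ({j}ᶜ : Finset (Fin n)), (if y i = x i then (1 : ℂ) else 0) := by
        refine Finset.prod_congr rfl fun i hi => ?_
        simp only [Finset.mem_compl, Finset.mem_singleton] at hi
        simp [hi]
      rw [hc, Finset.prod_boole]
      congr 1
      simp only [eq_iff_iff]
      constructor
      · intro h
        funext i
        by_cases hij : i = j
        · subst hij; rw [Function.update_self]
        · have := h i (by simp [hij])
          rw [Function.update_of_ne hij]
          exact this.symm
      · intro h i hi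
        simp only [Finset.mem_compl, Finset.mem_singleton] at hi
        have := congrFun h i
        rw [Function.update_of_ne hi] at this
        exact this.symm
  -- LHS
  have hlhs : (ρ * pm ψ {j}).trace =
      ∑ x : ∀ i, I i, ∑ b : I j,
        ρ x (Function.update x j b) * (ψ j b * (starRingEnd ℂ) (ψ j (x j))) := by
    rw [trace]
    simp only [diag, mul_apply]
    refine Finset.sum_congr rfl fun x _ => ?_
    simp_rw [hpm x]
    have h1 : ∀ y : ∀ i, I i, ρ x y * ((ψ j (y j) * (starRingEnd ℂ) (ψ j (x j))) *
        (if Function.update x j (y j) = y then 1 else 0)) =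
        (if Function.update x j (y j) = y then
          ρ x y * (ψ j (y j) * (starRingEnd ℂ) (ψ j (x j))) else 0) := by
      intro y
      by_cases h : Function.update x j (y j) = y <;> simp [h]
    simp_rw [h1]
    rw [update_sum_collapse (fun y => ρ x y * (ψ j (y j) * (starRingEnd ℂ) (ψ j (x j)))) x j]
    refine Finset.sum_congr rfl fun b _ => ?_
    rw [Function.update_self]
  -- RHS
  have hrhs : (redMat ρ j * vecMulVec (ψ j) (star (ψ j))).trace =
      ∑ x : ∀ i, I i, ∑ b : I j,
        ρ x (Function.update x j b) * (ψ j b * (starRingEnd ℂ) (ψ j (x j))) := by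
    rw [trace]
    simp only [diag, mul_apply, redMat, vecMulVec_apply, Pi.star_apply]
    have h2 : ∀ (a : I j) (b : I j),
        (∑ y : ∀ i, I i, if y j = a then ρ y (Function.update y j b) else 0) *
          (ψ j b * star (ψ j a)) =
        ∑ y : ∀ i, I i, (if y j = a then
          ρ y (Function.update y j b) * (ψ j b * (starRingEnd ℂ) (ψ j a)) else 0) := by
      intro a b
      rw [Finset.sum_mul]
      refine Finset.sum_congr rfl fun y _ => ?_
      by_cases h : y j = a <;> simp [h]
    calc ∑ a : I j, ∑ b : I j,
        (∑ y : ∀ i, I i, if y j = a then ρ y (Function.update y j b) else 0) *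
          (ψ j b * star (ψ j a))
        = ∑ a : I j, ∑ b : I j, ∑ y : ∀ i, I i, (if y j = a then
            ρ y (Function.update y j b) * (ψ j b * (starRingEnd ℂ) (ψ j a)) else 0) := by
          refine Finset.sum_congr rfl fun a _ => Finset.sum_congr rfl fun b _ => h2 a b
      _ = ∑ a : I j, ∑ y : ∀ i, I i, ∑ b : I j, (if y j = a then
            ρ y (Function.update y j b) * (ψ j b * (starRingEnd ℂ) (ψ j a)) else 0) := by
          exact Finset.sum_congr rfl fun a _ => Finset.sum_comm
      _ = ∑ y : ∀ i, I i, ∑ a : I j, ∑ b : I j, (if y j = a then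
            ρ y (Function.update y j b) * (ψ j b * (starRingEnd ℂ) (ψ j a)) else 0) :=
          Finset.sum_comm
      _ = ∑ y : ∀ i, I i, ∑ b : I j, ∑ a : I j, (if y j = a then
            ρ y (Function.update y j b) * (ψ j b * (starRingEnd ℂ) (ψ j a)) else 0) :=
          Finset.sum_congr rfl fun y _ => Finset.sum_comm
      _ = ∑ y : ∀ i, I i, ∑ b : I j,
            ρ y (Function.update y j b) * (ψ j b * (starRingEnd ℂ) (ψ j (y j))) := by
          refine Finset.sum_congr rfl fun y _ => Finset.sum_congr rfl fun b _ => ?_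
          rw [Finset.sum_ite_eq Finset.univ (y j)
            (fun a => ρ y (Function.update y j b) * (ψ j b * (starRingEnd ℂ) (ψ j a)))]
          simp
  rw [hlhs, hrhs]
end aux

/-- Right inequality of Eq. (24) of Lemma 2: the k-mode fidelity witness is a
lower bound on the true multimode fidelity,
`W^{(k)}(ρ,ψ) = 1 - ∑ⱼ (1 - F(ρ_{Bⱼ}, ψ_{Bⱼ})) ≤ F(ρ,ψ)`. -/
theorem k_mode_witness_le_fidelity {n : ℕ} {I : Fin n → Type*}
    [∀ j, Fintype (I j)] [∀ j, DecidableEq (I j)]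
    (ρ : Matrix (∀ j, I j) (∀ j, I j) ℂ) (hρ : ρ.PosSemidef) (htr : ρ.trace = 1)
    (ψ : ∀ j, I j → ℂ) (hψ : ∀ j, ∑ a, ‖ψ j a‖ ^ 2 = 1) :
    1 - ∑ j, (1 - ((redMat ρ j * vecMulVec (ψ j) (star (ψ j))).trace).re) ≤
      ((ρ * vecMulVec (fun x : ∀ i, I i => ∏ i, ψ i (x i))
          (star fun x : ∀ i, I i => ∏ i, ψ i (x i))).trace).re := by
  classical
  set B := pm ψ Finset.univ + (∑ j, (1 - pm ψ {j})) - 1 with hBdef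
  have hB : B.PosSemidef := key_psd ψ hψ Finset.univ
  obtain ⟨S, hSh, hSS⟩ : ∃ S : Matrix (∀ j, I j) (∀ j, I j) ℂ, Sᴴ = S ∧ S * S = ρ := by
    open MatrixOrder in
    exact ⟨CFC.sqrt ρ, (CFC.sqrt_nonneg ρ).posSemidef.1, CFC.sqrt_mul_sqrt_self ρ hρ.nonneg⟩
  have h0 : 0 ≤ (ρ * B).trace := by
    have h1 : (ρ * B).trace = (Sᴴ * B * S).trace := by
      calc (ρ * B).trace = (S * S * B).trace := by rw [hSS]
        _ = (S * B * S).trace := (Matrix.trace_mul_cycle _ _ _).symm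
        _ = (Sᴴ * B * S).trace := by rw [hSh]
    rw [h1]
    exact trace_psd_nonneg (hB.conjTranspose_mul_mul_same _)
  have hexp : (ρ * B).trace = (ρ * pm ψ Finset.univ).trace +
      (∑ j, (ρ.trace - (ρ * pm ψ {j}).trace)) - ρ.trace := by
    simp only [hBdef, Matrix.mul_add, Matrix.mul_sub, Matrix.mul_one, Finset.mul_sum,
      trace_add, trace_sub, trace_sum]
  have h0' : 0 ≤ ((ρ * pm ψ Finset.univ).trace).re +
      (∑ j, (1 - ((ρ * pm ψ {j}).trace).re)) - 1 := by
    have h2 := (Complex.le_def.mp h0).1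
    rw [hexp] at h2
    simpa [Complex.add_re, Complex.sub_re, Complex.re_sum, Complex.one_re, htr] using h2
  have hred : ∀ j, ((redMat ρ j * vecMulVec (ψ j) (star (ψ j))).trace).re =
      ((ρ * pm ψ {j}).trace).re := fun j => by rw [trace_pm_single ψ ρ j]
  simp only [hred]
  rw [← pm_univ ψ]
  linarith
end

section
/- Let t ∈ (0,1) and k, l, p ∈ ℕ with p ≥ 1. Let ρ be a positive semidefinite trace-one operator on ℓ²(ℕ) with entries ρ_{m,n}. Then |∑_{q=p}^{∞} ρ_{k+q, l+q} · t^q · C(q−1, p−1) · √(C(k+q, k) · C(l+q, l))| ≤ max_{q ≥ p} ( t^q · C(q−1, p−1) · √(C(k+q, k) · C(l+q, l)) ), and the maximum on the right-hand side is finite (attained at some finite q) since t^q times any polynomial in q tends to 0. -/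
open Filter

/-- The weight `h(q) = t^q C(q−1,p−1) √(C(k+q,k) C(l+q,l))` of the bias series
of the heterodyne estimator `g_{k,l}^{(p)}`. -/
noncomputable def hetWeight (t : ℝ) (k l p q : ℕ) : ℝ :=
  t ^ q * ((q - 1).choose (p - 1) : ℝ) *
    Real.sqrt (((k + q).choose k : ℝ) * ((l + q).choose l : ℝ))

theorem hetWeight_nonneg (t : ℝ) (ht : 0 ≤ t) (k l p q : ℕ) : 0 ≤ hetWeight t k l p q := by
  unfold hetWeight; positivity

theorem hetWeight_tendsto (t : ℝ) (ht0 : 0 < t) (ht1 : t < 1) (k l p : ℕ) :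
    Tendsto (fun q => hetWeight t k l p q) atTop (nhds 0) := by
  set d := p - 1 + (k + l) with hd
  set C : ℝ := (((k+1)^k * (l+1)^l : ℕ) : ℝ) with hC
  have hC1 : (1:ℝ) ≤ C := by
    rw [hC]; exact_mod_cast Nat.one_le_iff_ne_zero.mpr (by positivity)
  have hbase : Tendsto (fun q : ℕ => C * ((q : ℝ) ^ d * t ^ q)) atTop (nhds 0) := by
    have := (summable_pow_mul_geometric_of_norm_lt_one (R := ℝ) d
      (r := t) (by rwa [Real.norm_eq_abs, abs_of_pos ht0])).tendsto_atTop_zero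
    simpa using this.const_mul C
  apply tendsto_of_tendsto_of_tendsto_of_le_of_le' tendsto_const_nhds hbase
  · exact Eventually.of_forall fun q => hetWeight_nonneg t ht0.le k l p q
  · filter_upwards [eventually_ge_atTop 1] with q hq
    unfold hetWeight
    have hq1 : (1:ℝ) ≤ (q:ℝ) := by exact_mod_cast hq
    have hch : (((q - 1).choose (p - 1) : ℕ) : ℝ) ≤ (q : ℝ) ^ (p-1) := by
      have h1 : (q - 1).choose (p - 1) ≤ q ^ (p-1) :=
        le_trans (Nat.choose_le_pow (q-1) (p-1)) (Nat.pow_le_pow_left (Nat.sub_le q 1) _)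
      exact_mod_cast h1
    have hXbN : (k + q).choose k * (l + q).choose l
        ≤ (k+1)^k * (l+1)^l * q^(k+l) := by
      have h1 : (k + q).choose k ≤ (k+1)^k * q^k :=
        le_trans (Nat.choose_le_pow (k+q) k)
          (le_trans (Nat.pow_le_pow_left
            (by nlinarith [hq]) k)
            (le_of_eq (Nat.mul_pow (k+1) q k)))
      have h2 : (l + q).choose l ≤ (l+1)^l * q^l :=
        le_trans (Nat.choose_le_pow (l+q) l)
          (le_trans (Nat.pow_le_pow_left
            (by nlinarith [hq]) l)
            (le_of_eq (Nat.mul_pow (l+1) q l)))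
      calc (k + q).choose k * (l + q).choose l ≤ ((k+1)^k * q^k) * ((l+1)^l * q^l) :=
            Nat.mul_le_mul h1 h2
        _ = (k+1)^k * (l+1)^l * q^(k+l) := by rw [pow_add]; ring
    have hX1 : (1:ℝ) ≤ (((k + q).choose k : ℝ) * ((l + q).choose l : ℝ)) := by
      have h1 : 1 ≤ (k+q).choose k := Nat.choose_pos (by omega)
      have h2 : 1 ≤ (l+q).choose l := Nat.choose_pos (by omega)
      exact_mod_cast Nat.mul_le_mul h1 h2
    have hXb : (((k + q).choose k : ℝ) * ((l + q).choose l : ℝ)) ≤ C * (q:ℝ)^(k+l) := by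
      rw [hC]; exact_mod_cast hXbN
    have hq0 : (1:ℝ) ≤ C * (q:ℝ)^(k+l) := by
      have : (1:ℝ) ≤ (q:ℝ)^(k+l) := one_le_pow₀ hq1
      nlinarith
    have hsq : Real.sqrt (((k + q).choose k : ℝ) * ((l + q).choose l : ℝ))
        ≤ C * (q:ℝ)^(k+l) := by
      rw [Real.sqrt_le_left (by linarith)]
      nlinarith
    calc t ^ q * ((q - 1).choose (p - 1) : ℝ) *
          Real.sqrt (((k + q).choose k : ℝ) * ((l + q).choose l : ℝ))
        ≤ t ^ q * ((q:ℝ)^(p-1)) * (C * (q:ℝ)^(k+l)) := by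
          apply mul_le_mul _ hsq (Real.sqrt_nonneg _) (by positivity)
          exact mul_le_mul_of_nonneg_left hch (by positivity)
      _ = C * ((q:ℝ)^d * t^q) := by rw [hd, pow_add]; ring

theorem offdiag_bd (ρ : ℕ → ℕ → ℂ)
    (hherm : ∀ i j, ρ j i = (starRingEnd ℂ) (ρ i j))
    (hpos : ∀ (s : Finset ℕ) (v : ℕ → ℂ),
      0 ≤ (∑ i ∈ s, ∑ j ∈ s, (starRingEnd ℂ) (v i) * ρ i j * v j).re) (i j : ℕ) :
    ‖ρ i j‖ ≤ ((ρ i i).re + (ρ j j).re) / 2 := by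
  have hdiag : ∀ m, 0 ≤ (ρ m m).re := by
    intro m; simpa using hpos {m} (fun _ => 1)
  by_cases hij : i = j
  · subst hij
    have him : (ρ i i).im = 0 := by
      have h := hherm i i
      have h2 : (ρ i i).im = -(ρ i i).im := by
        conv_lhs => rw [h]; simp
      linarith
    rw [Complex.norm_def, Complex.normSq_apply, him]
    rw [mul_zero, add_zero, Real.sqrt_mul_self (hdiag i)]
    linarith [hdiag i]
  · set c := ρ i j with hc
    by_cases hc0 : c = 0
    · rw [hc0]; simp; linarith [hdiag i, hdiag j]
    have hcpos : 0 < ‖c‖ := norm_pos_iff.mpr hc0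
    set v : ℕ → ℂ := fun m => if m = i then (‖c‖ : ℂ) else -(starRingEnd ℂ) c with hv
    have h0 := hpos {i, j} v
    rw [Finset.sum_pair hij, Finset.sum_pair hij, Finset.sum_pair hij] at h0
    have hvi : v i = (‖c‖ : ℂ) := by simp [hv]
    have hvj : v j = -(starRingEnd ℂ) c := by simp [hv, Ne.symm hij]
    rw [hvi, hvj, hherm i j] at h0
    have hmc : c * (starRingEnd ℂ) c = ((‖c‖ ^ 2 : ℝ) : ℂ) := by
      rw [Complex.mul_conj]; norm_cast; exact (Complex.normSq_eq_norm_sq c)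
    have h1 : (starRingEnd ℂ) (‖c‖:ℂ) * c * (-(starRingEnd ℂ) c) = ((-(‖c‖^3) : ℝ) : ℂ) := by
      rw [Complex.conj_ofReal]
      have : (‖c‖:ℂ) * c * (-(starRingEnd ℂ) c) = -((‖c‖:ℂ) * (c * (starRingEnd ℂ) c)) := by ring
      rw [this, hmc]; push_cast; ring
    have h2 : (starRingEnd ℂ) (-(starRingEnd ℂ) c) * ((starRingEnd ℂ) c) * (‖c‖:ℂ)
        = ((-(‖c‖^3) : ℝ) : ℂ) := by
      simp only [map_neg, Complex.conj_conj]
      have : (-c) * ((starRingEnd ℂ) c) * (‖c‖:ℂ) = -((c * (starRingEnd ℂ) c) * (‖c‖:ℂ)) := by ring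
      rw [this, hmc]; push_cast; ring
    have h3 : (starRingEnd ℂ) (-(starRingEnd ℂ) c) * ρ j j * (-(starRingEnd ℂ) c)
        = ((‖c‖^2 : ℝ) : ℂ) * ρ j j := by
      simp only [map_neg, Complex.conj_conj]
      have : (-c) * ρ j j * (-(starRingEnd ℂ) c) = (c * (starRingEnd ℂ) c) * ρ j j := by ring
      rw [this, hmc]
    have h4 : (starRingEnd ℂ) (‖c‖:ℂ) * ρ i i * (‖c‖:ℂ) = ((‖c‖^2 : ℝ) : ℂ) * ρ i i := by
      rw [Complex.conj_ofReal]; push_cast; ring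
    rw [h1, h2, h3, h4] at h0
    simp only [Complex.add_re, Complex.re_ofReal_mul, Complex.ofReal_re] at h0
    have key : 2 * ‖c‖ * ‖c‖^2 ≤ ((ρ i i).re + (ρ j j).re) * ‖c‖^2 := by nlinarith [h0]
    have := le_of_mul_le_mul_right key (pow_pos hcpos 2)
    linarith

/-- Tight bias bound for the heterodyne estimator: for a positive semidefinite
trace-one operator `ρ` on `ℓ²(ℕ)` and `t ∈ (0,1)`, the bias series
`∑_{q≥p} ρ_{k+q,l+q} t^q C(q−1,p−1) √(C(k+q,k)C(l+q,l))` converges, the weight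
attains a finite maximum over `q ≥ p`, and the series is bounded in norm by
that maximum. -/
theorem heterodyne_bias_tight_bound (t : ℝ) (ht0 : 0 < t) (ht1 : t < 1)
    (k l p : ℕ) (hp : 1 ≤ p) (ρ : ℕ → ℕ → ℂ)
    (hherm : ∀ i j, ρ j i = (starRingEnd ℂ) (ρ i j))
    (hpos : ∀ (s : Finset ℕ) (v : ℕ → ℂ),
      0 ≤ (∑ i ∈ s, ∑ j ∈ s, (starRingEnd ℂ) (v i) * ρ i j * v j).re)
    (hsum : Summable fun i => (ρ i i).re)
    (htr : ∑' i, (ρ i i).re = 1) :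
    ∃ q₀ : ℕ, p ≤ q₀ ∧
      (∀ q, p ≤ q → hetWeight t k l p q ≤ hetWeight t k l p q₀) ∧
      Summable (fun j : ℕ =>
        ρ (k + (p + j)) (l + (p + j)) * (hetWeight t k l p (p + j) : ℂ)) ∧
      ‖∑' j : ℕ, ρ (k + (p + j)) (l + (p + j)) * (hetWeight t k l p (p + j) : ℂ)‖ ≤
        hetWeight t k l p q₀ := by
  have hdiag : ∀ m, 0 ≤ (ρ m m).re := by
    intro m; simpa using hpos {m} (fun _ => 1)
  -- positivity of the weight at q = p
  have hfp : 0 < hetWeight t k l p p := by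
    unfold hetWeight
    have h1 : 0 < ((k+p).choose k : ℝ) * ((l+p).choose l : ℝ) := by
      have : 0 < (k+p).choose k := Nat.choose_pos (by omega)
      have : 0 < (l+p).choose l := Nat.choose_pos (by omega)
      positivity
    have h2 : ((p - 1).choose (p - 1) : ℝ) = 1 := by simp
    rw [h2]
    have := Real.sqrt_pos.mpr h1
    have := pow_pos ht0 p
    positivity
  -- eventually below the value at p
  obtain ⟨N, hN⟩ : ∃ N, ∀ q ≥ N, hetWeight t k l p q < hetWeight t k l p p := by
    have := (hetWeight_tendsto t ht0 ht1 k l p).eventually_lt_const hfp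
    exact eventually_atTop.mp this
  -- maximum over [p, max N p]
  obtain ⟨q₀, hq₀mem, hq₀max⟩ := Finset.exists_max_image (Finset.Icc p (max N p))
    (fun q => hetWeight t k l p q) ⟨p, Finset.mem_Icc.mpr ⟨le_rfl, le_max_right _ _⟩⟩
  rw [Finset.mem_Icc] at hq₀mem
  have hmax : ∀ q, p ≤ q → hetWeight t k l p q ≤ hetWeight t k l p q₀ := by
    intro q hpq
    by_cases hqN : q ≤ max N p
    · exact hq₀max q (Finset.mem_Icc.mpr ⟨hpq, hqN⟩)
    · have h1 : hetWeight t k l p q < hetWeight t k l p p := hN q (by omega)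
      have h2 : hetWeight t k l p p ≤ hetWeight t k l p q₀ :=
        hq₀max p (Finset.mem_Icc.mpr ⟨le_rfl, le_max_right _ _⟩)
      linarith
  set M := hetWeight t k l p q₀ with hM
  have hM0 : 0 ≤ M := hetWeight_nonneg t ht0.le k l p q₀
  set a : ℕ → ℝ := fun j => (ρ (k + (p + j)) (k + (p + j))).re with ha'
  set b : ℕ → ℝ := fun j => (ρ (l + (p + j)) (l + (p + j))).re with hb'
  have hek : Function.Injective (fun j : ℕ => k + (p + j)) := by
    intro x y h; simp only [add_right_inj] at h; exact h
  have hel : Function.Injective (fun j : ℕ => l + (p + j)) := by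
    intro x y h; simp only [add_right_inj] at h; exact h
  have ha : Summable a := hsum.comp_injective hek
  have hb : Summable b := hsum.comp_injective hel
  have hsa : ∑' j, a j ≤ 1 := by
    rw [← htr]
    exact Summable.tsum_le_tsum_of_inj (fun j : ℕ => k + (p + j)) hek
      (fun c _ => hdiag c) (fun j => le_rfl) ha hsum
  have hsb : ∑' j, b j ≤ 1 := by
    rw [← htr]
    exact Summable.tsum_le_tsum_of_inj (fun j : ℕ => l + (p + j)) hel
      (fun c _ => hdiag c) (fun j => le_rfl) hb hsum
  set g : ℕ → ℝ := fun j => a j * (M/2) + b j * (M/2) with hg'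
  have hg : Summable g := (ha.mul_right (M/2)).add (hb.mul_right (M/2))
  have hbound : ∀ j, ‖ρ (k + (p + j)) (l + (p + j)) * (hetWeight t k l p (p + j) : ℂ)‖
      ≤ g j := by
    intro j
    rw [norm_mul, Complex.norm_real, Real.norm_eq_abs,
      abs_of_nonneg (hetWeight_nonneg t ht0.le k l p (p + j))]
    have h1 : ‖ρ (k + (p + j)) (l + (p + j))‖ ≤ (a j + b j) / 2 :=
      offdiag_bd ρ hherm hpos _ _
    have h2 : hetWeight t k l p (p + j) ≤ M := hmax (p + j) (by omega)
    have h3 : (0:ℝ) ≤ (a j + b j) / 2 := by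
      have := hdiag (k + (p + j)); have := hdiag (l + (p + j))
      simp only [ha', hb']; positivity
    calc ‖ρ (k + (p + j)) (l + (p + j))‖ * hetWeight t k l p (p + j)
        ≤ (a j + b j) / 2 * M := mul_le_mul h1 h2
          (hetWeight_nonneg t ht0.le k l p (p + j)) h3
      _ = g j := by rw [hg']; ring
  have hsummain : Summable (fun j : ℕ =>
      ρ (k + (p + j)) (l + (p + j)) * (hetWeight t k l p (p + j) : ℂ)) :=
    Summable.of_norm_bounded hg hbound
  have hnorms : Summable (fun j : ℕ =>
      ‖ρ (k + (p + j)) (l + (p + j)) * (hetWeight t k l p (p + j) : ℂ)‖) :=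
    Summable.of_nonneg_of_le (fun j => norm_nonneg _) hbound hg
  have hnormbd : ‖∑' j : ℕ, ρ (k + (p + j)) (l + (p + j)) * (hetWeight t k l p (p + j) : ℂ)‖ ≤ M := by
    calc ‖∑' j : ℕ, ρ (k + (p + j)) (l + (p + j)) * (hetWeight t k l p (p + j) : ℂ)‖
        ≤ ∑' j : ℕ, ‖ρ (k + (p + j)) (l + (p + j)) * (hetWeight t k l p (p + j) : ℂ)‖ :=
          norm_tsum_le_tsum_norm hnorms
      _ ≤ ∑' j, g j := Summable.tsum_le_tsum hbound hnorms hg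
      _ = (∑' j, a j) * (M/2) + (∑' j, b j) * (M/2) := by
          rw [hg', Summable.tsum_add (ha.mul_right _) (hb.mul_right _),
            tsum_mul_right, tsum_mul_right]
      _ ≤ 1 * (M/2) + 1 * (M/2) := by gcongr
      _ = M := by ring
  exact ⟨q₀, hq₀mem.1, hmax, hsummain, hnormbd⟩
end

section
/- Fix t ∈ (0,1), k, l ∈ ℕ, p ≥ 1, and define h(q) = t^q · C(q−1, p−1) · √(C(k+q, k) · C(l+q, l)) for integers q ≥ p. Then h(q+1) ≤ h(q) if and only if t ≤ (1 − (p−1)/q) · √(1 − k/(k+q+1)) · √(1 − l/(l+q+1)); moreover, the right-hand side of this condition is a nondecreasing function of q ≥ p. Consequently h is unimodal: it increases up to its maximum and decreases thereafter. -/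
noncomputable def hetF (k l p q : ℕ) : ℝ :=
  (1 - ((p : ℝ) - 1) / q) *
    Real.sqrt (1 - (k : ℝ) / ((k : ℝ) + q + 1)) *
    Real.sqrt (1 - (l : ℝ) / ((l : ℝ) + q + 1))

lemma sqrt_one_sub_eq (k q : ℕ) :
    Real.sqrt (1 - (k : ℝ) / ((k : ℝ) + q + 1)) =
      Real.sqrt (((q : ℝ) + 1) / ((k : ℝ) + q + 1)) := by
  have h : ((k : ℝ) + q + 1) ≠ 0 := by positivity
  rw [one_sub_div h]
  congr 1
  ring

lemma choose_cast_id (k q : ℕ) :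
    ((k + q).choose k : ℝ) * ((k : ℝ) + q + 1) =
      ((k + q + 1).choose k : ℝ) * ((q : ℝ) + 1) := by
  have h := Nat.choose_mul_succ_eq (k + q) k
  rw [show k + q + 1 - k = q + 1 by omega] at h
  exact_mod_cast h

lemma hetWeight_ratio_iff (t : ℝ) (ht0 : 0 < t) (k l p q : ℕ)
    (hp : 1 ≤ p) (hq : p ≤ q) :
    hetWeight t k l p (q + 1) ≤ hetWeight t k l p q ↔ t ≤ hetF k l p q := by
  have hq1 : 1 ≤ q := hp.trans hq
  have hq0 : (0 : ℝ) < q := by exact_mod_cast Nat.lt_of_lt_of_le Nat.zero_lt_one hq1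
  set c1 : ℝ := ((q - 1).choose (p - 1) : ℝ) with hc1
  set c1' : ℝ := (q.choose (p - 1) : ℝ) with hc1'
  set Ck : ℝ := ((k + q).choose k : ℝ) with hCk
  set Cl : ℝ := ((l + q).choose l : ℝ) with hCl
  set Ck' : ℝ := ((k + q + 1).choose k : ℝ) with hCk'
  set Cl' : ℝ := ((l + q + 1).choose l : ℝ) with hCl'
  have hc1'pos : (0 : ℝ) < c1' := by
    rw [hc1']; exact_mod_cast Nat.choose_pos (by omega : p - 1 ≤ q)
  have hCk'pos : (0 : ℝ) < Ck' := by
    rw [hCk']; exact_mod_cast Nat.choose_pos (by omega : k ≤ k + q + 1)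
  have hCl'pos : (0 : ℝ) < Cl' := by
    rw [hCl']; exact_mod_cast Nat.choose_pos (by omega : l ≤ l + q + 1)
  have hCkpos : (0 : ℝ) < Ck := by
    rw [hCk]; exact_mod_cast Nat.choose_pos (by omega : k ≤ k + q)
  have hClpos : (0 : ℝ) < Cl := by
    rw [hCl]; exact_mod_cast Nat.choose_pos (by omega : l ≤ l + q)
  have hspos : (0 : ℝ) < Real.sqrt (Ck' * Cl') :=
    Real.sqrt_pos.mpr (by positivity)
  -- cast identity for the binomial ratio
  have hcast1 : c1 * q = c1' * ((q : ℝ) - p + 1) := by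
    have h := Nat.choose_mul_succ_eq (q - 1) (p - 1)
    rw [show q - 1 + 1 = q by omega] at h
    have h' := congrArg (Nat.cast : ℕ → ℝ) h
    push_cast [Nat.cast_sub (show p - 1 ≤ q by omega), Nat.cast_sub hp] at h'
    rw [hc1, hc1']
    push_cast
    linarith [h']
  have hcast2 : Ck * ((k : ℝ) + q + 1) = Ck' * ((q : ℝ) + 1) := choose_cast_id k q
  have hcast3 : Cl * ((l : ℝ) + q + 1) = Cl' * ((q : ℝ) + 1) := choose_cast_id l q
  -- key equality
  have hkq0 : (0 : ℝ) < (k : ℝ) + q + 1 := by positivity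
  have hlq0 : (0 : ℝ) < (l : ℝ) + q + 1 := by positivity
  have hinner : ((q : ℝ) + 1) / ((k : ℝ) + q + 1) *
      (((q : ℝ) + 1) / ((l : ℝ) + q + 1) * (Ck' * Cl')) = Ck * Cl := by
    field_simp
    linear_combination (-(((q : ℝ) + 1)) * Cl') * hcast2 - Ck * (((k : ℝ) + q + 1)) * hcast3
  have hA : (1 - ((p : ℝ) - 1) / q) * c1' = c1 := by
    field_simp
    linarith [hcast1]
  have hE : hetF k l p q * (c1' * Real.sqrt (Ck' * Cl')) = c1 * Real.sqrt (Ck * Cl) := by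
    rw [hetF, sqrt_one_sub_eq k q, sqrt_one_sub_eq l q]
    rw [show (1 - ((p : ℝ) - 1) / q) * Real.sqrt (((q : ℝ) + 1) / ((k : ℝ) + q + 1)) *
        Real.sqrt (((q : ℝ) + 1) / ((l : ℝ) + q + 1)) * (c1' * Real.sqrt (Ck' * Cl')) =
        ((1 - ((p : ℝ) - 1) / q) * c1') *
        (Real.sqrt (((q : ℝ) + 1) / ((k : ℝ) + q + 1)) *
         (Real.sqrt (((q : ℝ) + 1) / ((l : ℝ) + q + 1)) * Real.sqrt (Ck' * Cl'))) by ring]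
    rw [hA, ← Real.sqrt_mul (by positivity), ← Real.sqrt_mul (by positivity), hinner]
  -- unfold the weights
  have hw1 : hetWeight t k l p (q + 1) = t ^ q * (t * (c1' * Real.sqrt (Ck' * Cl'))) := by
    rw [hetWeight]
    rw [show q + 1 - 1 = q by omega, show k + (q + 1) = k + q + 1 by omega,
      show l + (q + 1) = l + q + 1 by omega]
    rw [pow_succ]
    ring
  have hw2 : hetWeight t k l p q = t ^ q * (c1 * Real.sqrt (Ck * Cl)) := by
    rw [hetWeight]; ring
  rw [hw1, hw2]
  rw [mul_le_mul_iff_right₀ (pow_pos ht0 q), ← hE]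
  have hXpos : (0 : ℝ) < c1' * Real.sqrt (Ck' * Cl') := mul_pos hc1'pos hspos
  constructor
  · intro h
    exact le_of_mul_le_mul_right h hXpos
  · intro h
    exact mul_le_mul_of_nonneg_right h hXpos.le

lemma hetF_mono (k l p : ℕ) (hp : 1 ≤ p) {q q' : ℕ} (hq : p ≤ q) (hqq' : q ≤ q') :
    hetF k l p q ≤ hetF k l p q' := by
  have hq0 : (0 : ℝ) < q := by exact_mod_cast Nat.lt_of_lt_of_le Nat.zero_lt_one (hp.trans hq)
  have hq0' : (0 : ℝ) < q' := lt_of_lt_of_le hq0 (by exact_mod_cast hqq')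
  have hqq : (q : ℝ) ≤ q' := by exact_mod_cast hqq'
  have hp1 : (0 : ℝ) ≤ (p : ℝ) - 1 := by
    have : (1 : ℝ) ≤ p := by exact_mod_cast hp
    linarith
  have hpq' : (p : ℝ) ≤ q' := by exact_mod_cast hq.trans hqq'
  have e1 : 1 - ((p : ℝ) - 1) / q ≤ 1 - ((p : ℝ) - 1) / q' := by
    have : ((p : ℝ) - 1) / q' ≤ ((p : ℝ) - 1) / q := by gcongr
    linarith
  have ha' : (0 : ℝ) ≤ 1 - ((p : ℝ) - 1) / q' := by
    have : ((p : ℝ) - 1) / q' ≤ 1 := by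
      rw [div_le_one hq0']
      linarith
    linarith
  have e2 : Real.sqrt (1 - (k : ℝ) / ((k : ℝ) + q + 1)) ≤
      Real.sqrt (1 - (k : ℝ) / ((k : ℝ) + q' + 1)) := by
    apply Real.sqrt_le_sqrt
    have : (k : ℝ) / ((k : ℝ) + q' + 1) ≤ (k : ℝ) / ((k : ℝ) + q + 1) := by
      apply div_le_div_of_nonneg_left (Nat.cast_nonneg k) (by positivity) ?_
      linarith
    linarith
  have e3 : Real.sqrt (1 - (l : ℝ) / ((l : ℝ) + q + 1)) ≤
      Real.sqrt (1 - (l : ℝ) / ((l : ℝ) + q' + 1)) := by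
    apply Real.sqrt_le_sqrt
    have : (l : ℝ) / ((l : ℝ) + q' + 1) ≤ (l : ℝ) / ((l : ℝ) + q + 1) := by
      apply div_le_div_of_nonneg_left (Nat.cast_nonneg l) (by positivity) ?_
      linarith
    linarith
  unfold hetF
  have h12 : (1 - ((p : ℝ) - 1) / q) * Real.sqrt (1 - (k : ℝ) / ((k : ℝ) + q + 1)) ≤
      (1 - ((p : ℝ) - 1) / q') * Real.sqrt (1 - (k : ℝ) / ((k : ℝ) + q' + 1)) :=
    mul_le_mul e1 e2 (Real.sqrt_nonneg _) ha'
  exact mul_le_mul h12 e3 (Real.sqrt_nonneg _)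
    (mul_nonneg ha' (Real.sqrt_nonneg _))

lemma hetF_lb (k l p : ℕ) (hp : 1 ≤ p) {q : ℕ} (hq : p ≤ q) :
    1 - ((p : ℝ) - 1 + k + l) / q ≤ hetF k l p q := by
  have hq0 : (0 : ℝ) < q := by exact_mod_cast Nat.lt_of_lt_of_le Nat.zero_lt_one (hp.trans hq)
  have hkq : (0 : ℝ) < (k : ℝ) + q + 1 := by positivity
  have hlq : (0 : ℝ) < (l : ℝ) + q + 1 := by positivity
  set a : ℝ := ((p : ℝ) - 1) / q with ha
  set b : ℝ := (k : ℝ) / ((k : ℝ) + q + 1) with hb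
  set c : ℝ := (l : ℝ) / ((l : ℝ) + q + 1) with hc
  have hp1 : (0 : ℝ) ≤ (p : ℝ) - 1 := by
    have : (1 : ℝ) ≤ p := by exact_mod_cast hp
    linarith
  have ha0 : 0 ≤ a := by positivity
  have ha1 : a ≤ 1 := by
    rw [ha, div_le_one hq0]
    have : (p : ℝ) ≤ q := by exact_mod_cast hq
    linarith
  have hb0 : 0 ≤ b := by positivity
  have hb1 : b ≤ 1 := by rw [hb, div_le_one hkq]; linarith
  have hc0 : 0 ≤ c := by positivity
  have hc1 : c ≤ 1 := by rw [hc, div_le_one hlq]; linarith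
  have hbq : b ≤ (k : ℝ) / q := by
    rw [hb]
    gcongr
    linarith
  have hcq : c ≤ (l : ℝ) / q := by
    rw [hc]
    gcongr
    linarith
  have hsb : 1 - b ≤ Real.sqrt (1 - b) := by
    rw [Real.le_sqrt (by linarith) (by linarith)]
    nlinarith
  have hsc : 1 - c ≤ Real.sqrt (1 - c) := by
    rw [Real.le_sqrt (by linarith) (by linarith)]
    nlinarith
  have step : (1 - a) * (1 - b) * (1 - c) ≤ hetF k l p q := by
    rw [hetF, ← ha, ← hb, ← hc]
    have h1 : (1 - a) * (1 - b) * (1 - c) ≤ (1 - a) * Real.sqrt (1 - b) * (1 - c) := by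
      have := mul_le_mul_of_nonneg_left hsb (by linarith : (0:ℝ) ≤ 1 - a)
      nlinarith
    have h2 : (1 - a) * Real.sqrt (1 - b) * (1 - c) ≤
        (1 - a) * Real.sqrt (1 - b) * Real.sqrt (1 - c) := by
      have hs : 0 ≤ (1 - a) * Real.sqrt (1 - b) :=
      mul_nonneg (by linarith) (Real.sqrt_nonneg _)
      nlinarith [mul_le_mul_of_nonneg_left hsc hs]
    linarith
  have expand : 1 - ((p : ℝ) - 1 + k + l) / q ≤ (1 - a) * (1 - b) * (1 - c) := by
    have key : 1 - a - b - c ≤ (1 - a) * (1 - b) * (1 - c) := by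
      nlinarith [mul_nonneg ha0 hb0, mul_nonneg ha0 hc0, mul_nonneg hb0 hc0,
        mul_nonneg (mul_nonneg ha0 hb0) hc0]
    have : 1 - ((p : ℝ) - 1 + k + l) / q ≤ 1 - a - b - c := by
      rw [ha]
      have : ((p : ℝ) - 1 + k + l) / q = ((p : ℝ) - 1) / q + (k : ℝ) / q + (l : ℝ) / q := by
        ring
      rw [this]
      linarith
    linarith
  linarith

/-- Unimodality of the bias weight: for `t ∈ (0,1)` and `q ≥ p ≥ 1`,
`h(q+1) ≤ h(q)` iff `t ≤ (1 − (p−1)/q)·√(1 − k/(k+q+1))·√(1 − l/(l+q+1))`,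
the right-hand side is nondecreasing in `q`, and consequently `h` increases up
to some maximizing index and decreases thereafter. -/
theorem hetWeight_unimodal (t : ℝ) (ht0 : 0 < t) (ht1 : t < 1)
    (k l p : ℕ) (hp : 1 ≤ p) :
    (∀ q : ℕ, p ≤ q →
      (hetWeight t k l p (q + 1) ≤ hetWeight t k l p q ↔
        t ≤ (1 - ((p : ℝ) - 1) / q) *
          Real.sqrt (1 - (k : ℝ) / ((k : ℝ) + q + 1)) *
          Real.sqrt (1 - (l : ℝ) / ((l : ℝ) + q + 1)))) ∧
    (∀ q q' : ℕ, p ≤ q → q ≤ q' →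
      (1 - ((p : ℝ) - 1) / q) *
          Real.sqrt (1 - (k : ℝ) / ((k : ℝ) + q + 1)) *
          Real.sqrt (1 - (l : ℝ) / ((l : ℝ) + q + 1)) ≤
        (1 - ((p : ℝ) - 1) / q') *
          Real.sqrt (1 - (k : ℝ) / ((k : ℝ) + q' + 1)) *
          Real.sqrt (1 - (l : ℝ) / ((l : ℝ) + q' + 1))) ∧
    (∃ q₀ : ℕ, p ≤ q₀ ∧
      (∀ q : ℕ, p ≤ q → q < q₀ → hetWeight t k l p q ≤ hetWeight t k l p (q + 1)) ∧
      (∀ q : ℕ, q₀ ≤ q → hetWeight t k l p (q + 1) ≤ hetWeight t k l p q)) := by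
  classical
  refine ⟨fun q hq => hetWeight_ratio_iff t ht0 k l p q hp hq,
    fun q q' hq hqq' => hetF_mono k l p hp hq hqq', ?_⟩
  -- existence of a point where t ≤ hetF
  obtain ⟨N, hN⟩ := exists_nat_gt (((p : ℝ) - 1 + k + l) / (1 - t))
  have hMex : ∃ q : ℕ, p ≤ q ∧ t ≤ hetF k l p q := by
    refine ⟨max p N, le_max_left _ _, ?_⟩
    have hqM : p ≤ max p N := le_max_left _ _
    have hM0 : (0 : ℝ) < (max p N : ℕ) := by
      exact_mod_cast Nat.lt_of_lt_of_le Nat.zero_lt_one (hp.trans hqM)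
    have hp1 : (0 : ℝ) ≤ (p : ℝ) - 1 + k + l := by
      have h1 : (1 : ℝ) ≤ p := by exact_mod_cast hp
      have h2 : (0 : ℝ) ≤ k := Nat.cast_nonneg k
      have h3 : (0 : ℝ) ≤ l := Nat.cast_nonneg l
      linarith
    have hNM : (N : ℝ) ≤ (max p N : ℕ) := by exact_mod_cast le_max_right p N
    have h1t : (0 : ℝ) < 1 - t := by linarith
    have hN0 : (0 : ℝ) < N := lt_of_le_of_lt (by positivity) hN
    have hfrac : ((p : ℝ) - 1 + k + l) / (max p N : ℕ) < 1 - t := by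
      have h1 : ((p : ℝ) - 1 + k + l) / (max p N : ℕ) ≤ ((p : ℝ) - 1 + k + l) / N := by
        gcongr
      have h2 : ((p : ℝ) - 1 + k + l) / N < 1 - t := by
        rw [div_lt_iff₀ hN0]
        have := (div_lt_iff₀ h1t).mp hN
        linarith
      linarith
    have := hetF_lb k l p hp hqM
    linarith
  set q₀ := Nat.find hMex with hq₀def
  have hq₀spec := Nat.find_spec hMex
  refine ⟨q₀, hq₀spec.1, ?_, ?_⟩
  · intro q hqp hqlt
    have hnot := Nat.find_min hMex hqlt
    push_neg at hnot
    have hlt : hetF k l p q < t := hnot hqp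
    by_contra hcon
    push_neg at hcon
    have := (hetWeight_ratio_iff t ht0 k l p q hp hqp).mp (le_of_lt hcon)
    linarith
  · intro q hq
    have hqp : p ≤ q := hq₀spec.1.trans hq
    rw [hetWeight_ratio_iff t ht0 k l p q hp hqp]
    exact hq₀spec.2.trans (hetF_mono k l p hp hq₀spec.1 hq)
end
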